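/- Let X be a system of N discrete random variables matching its environment (Y, f) (i.e., H(y|f(y)) = 0 for all y ∈ Y, with f : Y → X a bijection). Then for every nested partition sequence P of X and every scale n ≥ 1, the complexity profile satisfies C_X^P(n) ≥ C_Y^{P^f}(n), where P^f is the nested partition sequence of Y induced by f. -/

import Mathlib

open scoped BigOperators Classical

namespace Ashby

/-- A probability mass function on a finite sample space. -/
def IsProb {Ω : Type*} [Fintype Ω] (μ : Ω → ℝ) : Prop :=
  (∀ ω, 0 ≤ μ ω) ∧ ∑ ω, μ ω = 1

/-- Probability that the random variable `X` takes the value `a`. -/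
noncomputable def prob {Ω α : Type*} [Fintype Ω] (μ : Ω → ℝ) (X : Ω → α) (a : α) : ℝ :=
  ∑ ω, if X ω = a then μ ω else 0

/-- Shannon entropy of a discrete random variable. -/
noncomputable def H {Ω α : Type*} [Fintype Ω] [Fintype α] (μ : Ω → ℝ) (X : Ω → α) : ℝ :=
  ∑ a, Real.negMulLog (prob μ X a)

/-- Conditional entropy `H(Y|X)`. -/
noncomputable def condH {Ω α β : Type*} [Fintype Ω] [Fintype α] [Fintype β]
    (μ : Ω → ℝ) (Y : Ω → β) (X : Ω → α) : ℝ :=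
  H μ (fun ω => (X ω, Y ω)) - H μ X

/-- Mutual information `I(X;Y)`. -/
noncomputable def mutualInfo {Ω α β : Type*} [Fintype Ω] [Fintype α] [Fintype β]
    (μ : Ω → ℝ) (X : Ω → α) (Y : Ω → β) : ℝ :=
  H μ X + H μ Y - H μ (fun ω => (X ω, Y ω))

/-- Conditional mutual information `I(X;Y|Z)`. -/
noncomputable def condMutualInfo {Ω α β γ : Type*} [Fintype Ω] [Fintype α] [Fintype β] [Fintype γ]
    (μ : Ω → ℝ) (X : Ω → α) (Y : Ω → β) (Z : Ω → γ) : ℝ :=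
  condH μ X Z + condH μ Y Z - condH μ (fun ω => (X ω, Y ω)) Z

/-- Entropy of the joint random variable formed by the components of the system `x`
whose indices lie in the part `S`. -/
noncomputable def Hset {Ω α ι : Type*} [Fintype Ω] [Fintype α] [DecidableEq ι]
    (μ : Ω → ℝ) (x : ι → Ω → α) (S : Finset ι) : ℝ :=
  H μ (fun ω => (fun i : S => x i.1 ω))

/-- A nested partition sequence of the (index set of a) system: for each `n ≥ 1`,
`part n` is a partition of the index set, `part n` refines `part m` whenever `n ≥ m ≥ 1`,
and this refinement is strict whenever `|X| ≥ n > m ≥ 1`. -/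
structure NPS (ι : Type*) [Fintype ι] [DecidableEq ι] where
  part : ℕ → Finset (Finset ι)
  partition : ∀ n, 1 ≤ n → (∅ ∉ part n ∧ ∀ i : ι, ∃! χ, χ ∈ part n ∧ i ∈ χ)
  refines : ∀ m n, 1 ≤ m → m ≤ n → ∀ χ ∈ part n, ∃ χ' ∈ part m, χ ⊆ χ'
  strict : ∀ m n, 1 ≤ m → m < n → n ≤ Fintype.card ι → part n ≠ part m

/-- `S̃_X^P(n) = Σ_{χ ∈ P_n} H(χ)`, with `S̃_X^P(0) = 0`. -/
noncomputable def Stilde {Ω α ι : Type*} [Fintype Ω] [Fintype α] [Fintype ι] [DecidableEq ι]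
    (μ : Ω → ℝ) (x : ι → Ω → α) (P : NPS ι) (n : ℕ) : ℝ :=
  if n = 0 then 0 else ∑ χ ∈ P.part n, Hset μ x χ

/-- The complexity profile `C_X^P(n) = S̃_X^P(n) − S̃_X^P(n−1)`. -/
noncomputable def C {Ω α ι : Type*} [Fintype Ω] [Fintype α] [Fintype ι] [DecidableEq ι]
    (μ : Ω → ℝ) (x : ι → Ω → α) (P : NPS ι) (n : ℕ) : ℝ :=
  Stilde μ x P n - Stilde μ x P (n - 1)

set_option linter.unusedSectionVars false

section Core
variable {Ω α β γ δ : Type*} [Fintype Ω] [Fintype α] [Fintype β] [Fintype γ] [Fintype δ]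
variable {μ : Ω → ℝ}

lemma prob_nonneg (hμ0 : ∀ ω, 0 ≤ μ ω) (X : Ω → α) (a : α) : 0 ≤ prob μ X a := by
  refine Finset.sum_nonneg fun ω _ => ?_
  split <;> [exact hμ0 ω; exact le_rfl]

lemma sum_prob (μ : Ω → ℝ) (X : Ω → α) : ∑ a, prob μ X a = ∑ ω, μ ω := by
  unfold prob
  rw [Finset.sum_comm]
  refine Finset.sum_congr rfl fun ω _ => ?_
  simp

lemma H_comp_inj (μ : Ω → ℝ) (X : Ω → α) (e : α → β) (he : Function.Injective e) :
    H μ (fun ω => e (X ω)) = H μ X := by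
  classical
  unfold H
  have h0 : ∀ b ∈ (Finset.univ : Finset β), b ∉ Finset.univ.image e →
      Real.negMulLog (prob μ (fun ω => e (X ω)) b) = 0 := by
    intro b _ hb
    have : prob μ (fun ω => e (X ω)) b = 0 := by
      unfold prob
      refine Finset.sum_eq_zero fun ω _ => ?_
      have : e (X ω) ≠ b := fun h => hb (Finset.mem_image.2 ⟨X ω, Finset.mem_univ _, h⟩)
      simp [this]
    simp [this]
  rw [← Finset.sum_subset (Finset.subset_univ (Finset.univ.image e)) h0,
    Finset.sum_image (fun a _ b _ h => he h)]
  refine Finset.sum_congr rfl fun a _ => ?_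
  congr 1
  unfold prob
  refine Finset.sum_congr rfl fun ω _ => ?_
  simp [he.eq_iff]

lemma H_swap (μ : Ω → ℝ) (X : Ω → α) (Y : Ω → β) :
    H μ (fun ω => (Y ω, X ω)) = H μ (fun ω => (X ω, Y ω)) :=
  H_comp_inj μ (fun ω => (X ω, Y ω)) (fun p => (p.2, p.1))
    (fun p q h => by
      cases p; cases q
      simpa [Prod.ext_iff, and_comm] using h)

lemma negMulLog_sum_le {κ : Type*} (s : Finset κ) (p : κ → ℝ) (hp : ∀ i ∈ s, 0 ≤ p i) :
    Real.negMulLog (∑ i ∈ s, p i) ≤ ∑ i ∈ s, Real.negMulLog (p i) := by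
  rw [Real.negMulLog, neg_mul, Finset.sum_mul, ← Finset.sum_neg_distrib]
  refine Finset.sum_le_sum fun i hi => ?_
  rw [Real.negMulLog, neg_mul]
  refine neg_le_neg ?_
  rcases eq_or_lt_of_le (hp i hi) with h | h
  · simp [← h]
  · have hle : p i ≤ ∑ j ∈ s, p j := Finset.single_le_sum hp hi
    exact mul_le_mul_of_nonneg_left (Real.log_le_log h hle) (hp i hi)

lemma prob_fst (μ : Ω → ℝ) (X : Ω → α) (Y : Ω → β) (a : α) :
    prob μ X a = ∑ b, prob μ (fun ω => (X ω, Y ω)) (a, b) := by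
  unfold prob
  rw [Finset.sum_comm]
  refine Finset.sum_congr rfl fun ω _ => ?_
  simp only [Prod.mk.injEq, ite_and]
  by_cases h : X ω = a <;> simp [h]

lemma prob_snd (μ : Ω → ℝ) (X : Ω → α) (Y : Ω → β) (b : β) :
    prob μ Y b = ∑ a, prob μ (fun ω => (X ω, Y ω)) (a, b) := by
  unfold prob
  rw [Finset.sum_comm]
  refine Finset.sum_congr rfl fun ω _ => ?_
  simp only [Prod.mk.injEq, ite_and]
  by_cases h : Y ω = b <;> simp [h]

lemma H_le_H_pair (hμ0 : ∀ ω, 0 ≤ μ ω) (X : Ω → α) (Y : Ω → β) :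
    H μ X ≤ H μ (fun ω => (X ω, Y ω)) := by
  unfold H
  rw [Fintype.sum_prod_type]
  refine Finset.sum_le_sum fun a _ => ?_
  rw [prob_fst μ X Y a]
  exact negMulLog_sum_le _ _ fun b _ => prob_nonneg hμ0 _ _

lemma H_snd_le_H_pair (hμ0 : ∀ ω, 0 ≤ μ ω) (X : Ω → α) (Y : Ω → β) :
    H μ Y ≤ H μ (fun ω => (X ω, Y ω)) := by
  rw [← H_swap μ X Y]
  exact H_le_H_pair hμ0 Y X

lemma condH_nonneg (hμ0 : ∀ ω, 0 ≤ μ ω) (Y : Ω → β) (X : Ω → α) :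
    0 ≤ condH μ Y X :=
  sub_nonneg.2 (H_le_H_pair hμ0 X Y)

lemma gibbs {κ : Type*} [Fintype κ] (p q : κ → ℝ) (hp : ∀ i, 0 ≤ p i) (hq : ∀ i, 0 ≤ q i)
    (hpq : ∀ i, q i = 0 → p i = 0) (hsum : ∑ i, q i ≤ ∑ i, p i) :
    ∑ i, p i * Real.log (q i) ≤ ∑ i, p i * Real.log (p i) := by
  have key : ∀ i, p i * Real.log (q i) - p i * Real.log (p i) ≤ q i - p i := by
    intro i
    rcases eq_or_lt_of_le (hp i) with h | h
    · rw [← h]; simpa using hq i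
    · have hqpos : 0 < q i := by
        rcases eq_or_lt_of_le (hq i) with h2 | h2
        · exact absurd (hpq i h2.symm) (ne_of_gt h)
        · exact h2
      have : Real.log (q i / p i) ≤ q i / p i - 1 :=
        Real.log_le_sub_one_of_pos (div_pos hqpos h)
      rw [Real.log_div (ne_of_gt hqpos) (ne_of_gt h)] at this
      have := mul_le_mul_of_nonneg_left this (hp i)
      calc p i * Real.log (q i) - p i * Real.log (p i)
          = p i * (Real.log (q i) - Real.log (p i)) := by ring
        _ ≤ p i * (q i / p i - 1) := mul_le_mul_of_nonneg_left ‹Real.log (q i) - Real.log (p i) ≤ q i / p i - 1› (hp i)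
        _ = q i - p i := by field_simp
  have := Finset.sum_le_sum (fun i (_ : i ∈ Finset.univ) => key i)
  rw [Finset.sum_sub_distrib, Finset.sum_sub_distrib] at this
  linarith

lemma submod (hμ : IsProb μ) (X : Ω → α) (Y : Ω → β) (Z : Ω → γ) :
    H μ (fun ω => (Z ω, (X ω, Y ω))) + H μ Z
      ≤ H μ (fun ω => (Z ω, X ω)) + H μ (fun ω => (Z ω, Y ω)) := by
  classical
  obtain ⟨hμ0, hμ1⟩ := hμ
  set T : Ω → γ × α × β := fun ω => (Z ω, X ω, Y ω) with hT
  set p : γ × α × β → ℝ := prob μ T with hp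
  set pZX : γ × α → ℝ := prob μ (fun ω => (Z ω, X ω)) with hpZX
  set pZY : γ × β → ℝ := prob μ (fun ω => (Z ω, Y ω)) with hpZY
  set pZ : γ → ℝ := prob μ Z with hpZ
  have hpnn : ∀ u, 0 ≤ p u := fun u => prob_nonneg hμ0 _ _
  have hZXnn : ∀ u, 0 ≤ pZX u := fun u => prob_nonneg hμ0 _ _
  have hZYnn : ∀ u, 0 ≤ pZY u := fun u => prob_nonneg hμ0 _ _
  have hZnn : ∀ c, 0 ≤ pZ c := fun c => prob_nonneg hμ0 _ _
  -- marginals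
  have hmargX : ∀ c a, pZX (c, a) = ∑ b, p (c, a, b) := by
    intro c a
    rw [hpZX, hp, hT]
    unfold prob
    rw [Finset.sum_comm]
    refine Finset.sum_congr rfl fun ω _ => ?_
    simp only [Prod.mk.injEq, ite_and]
    by_cases h1 : Z ω = c <;> by_cases h2 : X ω = a <;> simp [h1, h2]
  have hmargY : ∀ c b, pZY (c, b) = ∑ a, p (c, a, b) := by
    intro c b
    rw [hpZY, hp, hT]
    unfold prob
    rw [Finset.sum_comm]
    refine Finset.sum_congr rfl fun ω _ => ?_
    simp only [Prod.mk.injEq, ite_and]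
    by_cases h1 : Z ω = c <;> by_cases h2 : Y ω = b <;> simp [h1, h2]
  have hmargZ : ∀ c, pZ c = ∑ a, ∑ b, p (c, a, b) := by
    intro c
    rw [hpZ,
      show prob μ Z c = ∑ u : α × β, prob μ T (c, u) from prob_fst μ Z (fun ω => (X ω, Y ω)) c,
      Fintype.sum_prod_type]
  -- marginal sums of pair-marginals
  have hsumX : ∀ c, ∑ a, pZX (c, a) = pZ c := by
    intro c
    rw [hmargZ c]
    exact Finset.sum_congr rfl fun a _ => hmargX c a
  have hsumY : ∀ c, ∑ b, pZY (c, b) = pZ c := by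
    intro c
    rw [hmargZ c, Finset.sum_comm]
    exact Finset.sum_congr rfl fun b _ => hmargY c b
  -- pointwise bounds
  have hple : ∀ c a b, p (c, a, b) ≤ pZX (c, a) := by
    intro c a b
    rw [hmargX]
    exact Finset.single_le_sum (fun b _ => hpnn (c, a, b)) (Finset.mem_univ b)
  have hpleY : ∀ c a b, p (c, a, b) ≤ pZY (c, b) := by
    intro c a b
    rw [hmargY]
    exact Finset.single_le_sum (fun a _ => hpnn (c, a, b)) (Finset.mem_univ a)
  have hpleZ : ∀ c a b, p (c, a, b) ≤ pZ c := by
    intro c a b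
    rw [hmargZ]
    calc p (c, a, b) ≤ ∑ b', p (c, a, b') :=
          Finset.single_le_sum (fun b' _ => hpnn (c, a, b')) (Finset.mem_univ b)
      _ ≤ ∑ a', ∑ b', p (c, a', b') :=
          Finset.single_le_sum (fun a' _ => Finset.sum_nonneg fun b' _ => hpnn (c, a', b'))
            (Finset.mem_univ a)
  -- the comparison distribution
  set q : γ × α × β → ℝ :=
    fun u => if pZ u.1 = 0 then 0 else pZX (u.1, u.2.1) * pZY (u.1, u.2.2) / pZ u.1 with hq
  have hqnn : ∀ u, 0 ≤ q u := by
    rintro ⟨c, a, b⟩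
    rw [hq]
    dsimp only
    split
    · exact le_rfl
    · exact div_nonneg (mul_nonneg (hZXnn _) (hZYnn _)) (hZnn c)
  have hqz : ∀ u, q u = 0 → p u = 0 := by
    rintro ⟨c, a, b⟩ h
    rw [hq] at h
    dsimp only at h
    by_cases hc : pZ c = 0
    · exact le_antisymm (by rw [← hc] at *; exact hpleZ c a b) (hpnn _)
    · rw [if_neg hc, div_eq_zero_iff] at h
      rcases h with h | h
      · rcases mul_eq_zero.1 h with h | h
        · exact le_antisymm (h ▸ hple c a b) (hpnn _)
        · exact le_antisymm (h ▸ hpleY c a b) (hpnn _)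
      · exact absurd h hc
  have hsumq : ∑ u, q u ≤ ∑ u, p u := by
    rw [Fintype.sum_prod_type, Fintype.sum_prod_type]
    refine Finset.sum_le_sum fun c _ => ?_
    rw [Fintype.sum_prod_type, Fintype.sum_prod_type]
    by_cases hc : pZ c = 0
    · have hq0 : ∀ a b, q (c, a, b) = 0 := fun a b => by simp [hq, hc]
      calc ∑ a, ∑ b, q (c, a, b) = 0 :=
            Finset.sum_eq_zero fun a _ => Finset.sum_eq_zero fun b _ => hq0 a b
        _ ≤ ∑ a, ∑ b, p (c, a, b) :=
            Finset.sum_nonneg fun a _ => Finset.sum_nonneg fun b _ => hpnn (c, a, b)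
    · have e1 : ∑ a, ∑ b, q (c, a, b) = (∑ a, pZX (c, a)) * (∑ b, pZY (c, b)) / pZ c := by
        rw [Finset.sum_mul, Finset.sum_div]
        refine Finset.sum_congr rfl fun a _ => ?_
        rw [Finset.mul_sum, Finset.sum_div]
        refine Finset.sum_congr rfl fun b _ => ?_
        simp [hq, hc]
      rw [e1, hsumX c, hsumY c, mul_div_assoc, div_self hc, mul_one, hmargZ c]
  have hgibbs : ∑ u, p u * Real.log (q u) ≤ ∑ u, p u * Real.log (p u) :=
    gibbs p q hpnn hqnn hqz hsumq
  -- expand log q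
  have hexp : ∑ u, p u * Real.log (q u)
      = ∑ u : γ × α × β, p u * (Real.log (pZX (u.1, u.2.1)) + Real.log (pZY (u.1, u.2.2))
          - Real.log (pZ u.1)) := by
    refine Finset.sum_congr rfl fun u _ => ?_
    rcases eq_or_lt_of_le (hpnn u) with h | h
    · rw [← h]; ring
    · obtain ⟨c, a, b⟩ := u
      have hZXpos : 0 < pZX (c, a) := lt_of_lt_of_le h (hple c a b)
      have hZYpos : 0 < pZY (c, b) := lt_of_lt_of_le h (hpleY c a b)
      have hZpos : 0 < pZ c := lt_of_lt_of_le h (hpleZ c a b)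
      have hcne : pZ c ≠ 0 := ne_of_gt hZpos
      have hqval : q (c, a, b) = pZX (c, a) * pZY (c, b) / pZ c := by
        simp [hq, hcne]
      rw [hqval, Real.log_div (ne_of_gt (mul_pos hZXpos hZYpos)) (ne_of_gt hZpos),
        Real.log_mul (ne_of_gt hZXpos) (ne_of_gt hZYpos)]
  -- identify entropy sums
  have hHT : H μ T = -∑ u, p u * Real.log (p u) := by
    rw [H, ← Finset.sum_neg_distrib]
    exact Finset.sum_congr rfl fun u _ => by rw [Real.negMulLog]; ring
  have hHZX : H μ (fun ω => (Z ω, X ω)) = -∑ u : γ × α, pZX u * Real.log (pZX u) := by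
    rw [H, ← Finset.sum_neg_distrib]
    exact Finset.sum_congr rfl fun u _ => by rw [Real.negMulLog]; ring
  have hHZY : H μ (fun ω => (Z ω, Y ω)) = -∑ u : γ × β, pZY u * Real.log (pZY u) := by
    rw [H, ← Finset.sum_neg_distrib]
    exact Finset.sum_congr rfl fun u _ => by rw [Real.negMulLog]; ring
  have hHZ : H μ Z = -∑ c, pZ c * Real.log (pZ c) := by
    rw [H, ← Finset.sum_neg_distrib]
    exact Finset.sum_congr rfl fun u _ => by rw [Real.negMulLog]; ring
  -- split the expanded sum into three marginal sums
  have hsplitX : ∑ u : γ × α × β, p u * Real.log (pZX (u.1, u.2.1))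
      = ∑ u : γ × α, pZX u * Real.log (pZX u) := by
    rw [Fintype.sum_prod_type, Fintype.sum_prod_type]
    refine Finset.sum_congr rfl fun c _ => ?_
    rw [Fintype.sum_prod_type]
    refine Finset.sum_congr rfl fun a _ => ?_
    dsimp only
    rw [hmargX c a, Finset.sum_mul]
  have hsplitY : ∑ u : γ × α × β, p u * Real.log (pZY (u.1, u.2.2))
      = ∑ u : γ × β, pZY u * Real.log (pZY u) := by
    rw [Fintype.sum_prod_type, Fintype.sum_prod_type]
    refine Finset.sum_congr rfl fun c _ => ?_
    rw [Fintype.sum_prod_type, Finset.sum_comm]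
    refine Finset.sum_congr rfl fun b _ => ?_
    dsimp only
    rw [hmargY c b, Finset.sum_mul]
  have hsplitZ : ∑ u : γ × α × β, p u * Real.log (pZ u.1)
      = ∑ c, pZ c * Real.log (pZ c) := by
    rw [Fintype.sum_prod_type]
    refine Finset.sum_congr rfl fun c _ => ?_
    rw [Fintype.sum_prod_type]
    dsimp only
    rw [hmargZ c, Finset.sum_mul]
    refine Finset.sum_congr rfl fun a _ => ?_
    rw [Finset.sum_mul]
  have hsum3 : ∑ u : γ × α × β, p u * (Real.log (pZX (u.1, u.2.1))
      + Real.log (pZY (u.1, u.2.2)) - Real.log (pZ u.1))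
      = (∑ u : γ × α, pZX u * Real.log (pZX u)) + (∑ u : γ × β, pZY u * Real.log (pZY u))
        - ∑ c, pZ c * Real.log (pZ c) := by
    rw [← hsplitX, ← hsplitY, ← hsplitZ, ← Finset.sum_add_distrib, ← Finset.sum_sub_distrib]
    exact Finset.sum_congr rfl fun u _ => by ring
  have hTgoal : H μ (fun ω => (Z ω, (X ω, Y ω))) = H μ T := rfl
  rw [hTgoal, hHT, hHZX, hHZY, hHZ]
  rw [hexp, hsum3] at hgibbs
  linarith

lemma condH_comp_inj (μ : Ω → ℝ) (W : Ω → δ) (V : Ω → α) (e : α → β)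
    (he : Function.Injective e) :
    condH μ (fun ω => e (V ω)) W = condH μ V W := by
  unfold condH
  have h : H μ (fun ω => (W ω, e (V ω))) = H μ (fun ω => (W ω, V ω)) :=
    H_comp_inj μ (fun ω => (W ω, V ω)) (fun p => (p.1, e p.2))
      (fun p q h => by
        cases p; cases q
        simp only [Prod.mk.injEq] at h ⊢
        exact ⟨h.1, he h.2⟩)
  rw [h]

lemma condH_pair_le (hμ : IsProb μ) (A : Ω → α) (B : Ω → β) (W : Ω → δ) :
    condH μ (fun ω => (A ω, B ω)) W ≤ condH μ A W + condH μ B W := by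
  have h3 : H μ (fun ω => (W ω, (A ω, B ω))) + H μ W
      ≤ H μ (fun ω => (W ω, A ω)) + H μ (fun ω => (W ω, B ω)) := submod hμ A B W
  unfold condH
  linarith

lemma condH_comp_cond_le (hμ : IsProb μ) (Y : Ω → β) (X : Ω → α) (g : α → δ) :
    condH μ Y X ≤ condH μ Y (fun ω => g (X ω)) := by
  have h1 : H μ (fun ω => (g (X ω), X ω)) = H μ X :=
    H_comp_inj μ X (fun a => (g a, a)) (fun a b h => congrArg Prod.snd h)
  have h2 : H μ (fun ω => (g (X ω), (X ω, Y ω))) = H μ (fun ω => (X ω, Y ω)) :=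
    H_comp_inj μ (fun ω => (X ω, Y ω)) (fun p => (g p.1, p)) (fun p q h => congrArg Prod.snd h)
  have h3 : H μ (fun ω => (g (X ω), (X ω, Y ω))) + H μ (fun ω => g (X ω))
      ≤ H μ (fun ω => (g (X ω), X ω)) + H μ (fun ω => (g (X ω), Y ω)) :=
    submod hμ X Y (fun ω => g (X ω))
  show H μ (fun ω => (X ω, Y ω)) - H μ X
      ≤ H μ (fun ω => (g (X ω), Y ω)) - H μ (fun ω => g (X ω))
  linarith

end Core

section Tup
variable {Ω α β δ ι : Type*} [Fintype Ω] [Fintype α] [Fintype β] [Fintype δ]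
  [Fintype ι] [DecidableEq ι]
variable {μ : Ω → ℝ}

/-- The joint random variable of the components indexed by `S`. -/
noncomputable def tup (x : ι → Ω → α) (S : Finset ι) : Ω → (S → α) :=
  fun ω (i : S) => x i.1 ω

lemma condH_tup_empty (W : Ω → δ) (x : ι → Ω → α) :
    condH μ (tup x (∅ : Finset ι)) W = 0 := by
  unfold condH
  have h : H μ (fun ω => (W ω, tup x (∅ : Finset ι) ω)) = H μ W := by
    have h2 : (fun ω => (W ω, tup x (∅ : Finset ι) ω))
        = fun ω => ((fun c : δ => (c, tup x (∅ : Finset ι) ω)) (W ω)) := rfl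
    have := H_comp_inj μ W
      (fun c : δ => (c, (fun i : (∅ : Finset ι) => ((Finset.notMem_empty i.1 i.2).elim : α))))
      (fun a b h => congrArg Prod.fst h)
    refine Eq.trans ?_ this
    congr 1
    funext ω
    refine Prod.ext rfl ?_
    funext i
    exact (Finset.notMem_empty i.1 i.2).elim
  rw [h]
  ring

lemma condH_tup_union (hμ : IsProb μ) (x : ι → Ω → α) (S T : Finset ι) (W : Ω → δ) :
    condH μ (tup x (S ∪ T)) W ≤ condH μ (tup x S) W + condH μ (tup x T) W := by
  have key : condH μ (fun ω => (tup x S ω, tup x T ω)) W = condH μ (tup x (S ∪ T)) W :=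
    condH_comp_inj μ W (tup x (S ∪ T))
      (fun f => (fun i : S => f ⟨i.1, Finset.mem_union_left T i.2⟩,
                 fun i : T => f ⟨i.1, Finset.mem_union_right S i.2⟩))
      (fun f g h => by
        funext i
        rcases Finset.mem_union.1 i.2 with hi | hi
        · exact congrFun (congrArg Prod.fst h) ⟨i.1, hi⟩
        · exact congrFun (congrArg Prod.snd h) ⟨i.1, hi⟩)
  rw [← key]
  exact condH_pair_le hμ _ _ W

lemma condH_tup_sup (hμ : IsProb μ) (x : ι → Ω → α) (𝒞 : Finset (Finset ι)) (W : Ω → δ) :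
    condH μ (tup x (𝒞.sup id)) W ≤ ∑ S ∈ 𝒞, condH μ (tup x S) W := by
  classical
  induction 𝒞 using Finset.induction_on with
  | empty =>
      rw [Finset.sum_empty, Finset.sup_empty]
      exact le_of_eq (condH_tup_empty W x)
  | @insert S 𝒞 hS ih =>
      rw [Finset.sum_insert hS, Finset.sup_insert]
      have : (id S ⊔ 𝒞.sup id) = S ∪ 𝒞.sup id := rfl
      rw [this]
      calc condH μ (tup x (S ∪ 𝒞.sup id)) W
          ≤ condH μ (tup x S) W + condH μ (tup x (𝒞.sup id)) W :=
            condH_tup_union hμ x S (𝒞.sup id) W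
        _ ≤ _ := by linarith [ih]

lemma condH_tup_le_sum (hμ : IsProb μ) (y : ι → Ω → β) (T : Finset ι) (W : Ω → δ) :
    condH μ (tup y T) W ≤ ∑ i ∈ T, condH μ (y i) W := by
  classical
  induction T using Finset.induction_on with
  | empty =>
      rw [Finset.sum_empty]
      exact le_of_eq (condH_tup_empty W y)
  | @insert a T ha ih =>
      rw [Finset.sum_insert ha]
      have key : condH μ (fun ω => (y a ω, tup y T ω)) W = condH μ (tup y (insert a T)) W :=
        condH_comp_inj μ W (tup y (insert a T))
          (fun f => (f ⟨a, Finset.mem_insert_self a T⟩,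
                     fun i : T => f ⟨i.1, Finset.mem_insert_of_mem i.2⟩))
          (fun f g h => by
            funext i
            obtain ⟨v, hv⟩ := i
            rcases Finset.mem_insert.1 hv with hi | hi
            · subst hi
              exact congrArg Prod.fst h
            · exact congrFun (congrArg Prod.snd h) ⟨v, hi⟩)
      rw [← key]
      calc condH μ (fun ω => (y a ω, tup y T ω)) W
          ≤ condH μ (y a) W + condH μ (tup y T) W := condH_pair_le hμ _ _ W
        _ ≤ _ := by linarith [ih]

lemma H_pair_tup_match (hμ : IsProb μ) (x : ι → Ω → α) (y : ι → Ω → β)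
    (hmatch : ∀ i, condH μ (y i) (x i) = 0) (S : Finset ι) :
    H μ (fun ω => (tup x S ω, tup y S ω)) = H μ (tup x S) := by
  have h1 : condH μ (tup y S) (tup x S) ≤ ∑ i ∈ S, condH μ (y i) (tup x S) :=
    condH_tup_le_sum hμ y S (tup x S)
  have h2 : ∀ i ∈ S, condH μ (y i) (tup x S) ≤ condH μ (y i) (x i) := by
    intro i hi
    exact condH_comp_cond_le hμ (y i) (tup x S) (fun f => f ⟨i, hi⟩)
  have h3 : condH μ (tup y S) (tup x S) ≤ 0 := by
    calc condH μ (tup y S) (tup x S) ≤ ∑ i ∈ S, condH μ (y i) (tup x S) := h1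
      _ ≤ ∑ i ∈ S, condH μ (y i) (x i) := Finset.sum_le_sum h2
      _ = 0 := by simp [hmatch]
  have h0 : condH μ (tup y S) (tup x S) = 0 :=
    le_antisymm h3 (condH_nonneg hμ.1 _ _)
  unfold condH at h0
  linarith

lemma H_diff_eq_condH (hμ : IsProb μ) (x : ι → Ω → α) (y : ι → Ω → β)
    (hmatch : ∀ i, condH μ (y i) (x i) = 0) (S : Finset ι) :
    H μ (tup x S) - H μ (tup y S) = condH μ (tup x S) (tup y S) := by
  unfold condH
  rw [H_swap μ (tup x S) (tup y S), H_pair_tup_match hμ x y hmatch S]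

end Tup

/-- Multi-scale law of requisite variety: if the system `x` matches its environment `y`
(componentwise, under the bijection identifying the index sets, `H(y_i|x_i)=0`), then for
every nested partition sequence `P` (with the corresponding induced sequence on `y`) and
every scale `n ≥ 1`, `C_X^P(n) ≥ C_Y^{P^f}(n)`. -/
theorem multiscale_requisite_variety {Ω α β ι : Type*} [Fintype Ω] [Fintype α] [Fintype β]
    [Fintype ι] [DecidableEq ι]
    (μ : Ω → ℝ) (hμ : IsProb μ)
    (x : ι → Ω → α) (y : ι → Ω → β)
    (hmatch : ∀ i, condH μ (y i) (x i) = 0)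
    (P : NPS ι) :
    ∀ n, 1 ≤ n → C μ y P n ≤ C μ x P n := by
  classical
  have hHx : ∀ S : Finset ι, Hset μ x S = H μ (tup x S) := fun S => rfl
  have hHy : ∀ S : Finset ι, Hset μ y S = H μ (tup y S) := fun S => rfl
  intro n hn
  rcases eq_or_lt_of_le hn with h1 | h2
  · -- n = 1
    subst h1
    unfold C Stilde
    norm_num
    refine Finset.sum_le_sum fun χ _ => ?_
    rw [hHx, hHy]
    calc H μ (tup y χ) ≤ H μ (fun ω => (tup x χ ω, tup y χ ω)) :=
          H_snd_le_H_pair hμ.1 (tup x χ) (tup y χ)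
      _ = H μ (tup x χ) := H_pair_tup_match hμ x y hmatch χ
  · -- 2 ≤ n
    set m := n - 1 with hm
    have hm1 : 1 ≤ m := by omega
    have hmn : m ≤ n := by omega
    have hn0 : n ≠ 0 := by omega
    have hm0 : m ≠ 0 := by omega
    unfold C Stilde
    rw [if_neg hn0, if_neg hm0, if_neg hn0, if_neg hm0]
    -- parent map
    set g : Finset ι → Finset ι :=
      fun χ => if h : ∃ χ' ∈ P.part m, χ ⊆ χ' then h.choose else ∅ with hgdef
    have hg : ∀ χ ∈ P.part n, g χ ∈ P.part m ∧ χ ⊆ g χ := by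
      intro χ hχ
      have hex : ∃ χ' ∈ P.part m, χ ⊆ χ' := P.refines m n hm1 hmn χ hχ
      rw [hgdef]
      dsimp only
      rw [dif_pos hex]
      exact ⟨hex.choose_spec.1, hex.choose_spec.2⟩
    have hmaps : ∀ χ ∈ P.part n, g χ ∈ P.part m := fun χ hχ => (hg χ hχ).1
    have hfibx := Finset.sum_fiberwise_of_maps_to hmaps (fun χ => Hset μ x χ)
    have hfiby := Finset.sum_fiberwise_of_maps_to hmaps (fun χ => Hset μ y χ)
    rw [← hfibx, ← hfiby, ← Finset.sum_sub_distrib, ← Finset.sum_sub_distrib]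
    refine Finset.sum_le_sum fun χ' hχ' => ?_
    set F := (P.part n).filter (fun χ => g χ = χ') with hF
    -- F.sup id = χ'
    have hsup : F.sup id = χ' := by
      apply le_antisymm
      · refine Finset.sup_le fun χ hχ => ?_
        rw [hF, Finset.mem_filter] at hχ
        obtain ⟨hχn, hgχ⟩ := hχ
        exact hgχ ▸ (hg χ hχn).2
      · intro i hi
        obtain ⟨χ, ⟨hχn, hiχ⟩, -⟩ := (P.partition n hn).2 i
        obtain ⟨χ₀, -, huniq⟩ := (P.partition m hm1).2 i
        have h1 : g χ = χ₀ := huniq (g χ) ⟨(hg χ hχn).1, (hg χ hχn).2 hiχ⟩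
        have h2 : χ' = χ₀ := huniq χ' ⟨hχ', hi⟩
        have hmem : χ ∈ F := by
          rw [hF, Finset.mem_filter]
          exact ⟨hχn, h1.trans h2.symm⟩
        exact Finset.le_sup (f := id) hmem hiχ
    -- per-part inequality
    have hchain : condH μ (tup x χ') (tup y χ') ≤ ∑ χ ∈ F, condH μ (tup x χ) (tup y χ) := by
      calc condH μ (tup x χ') (tup y χ')
          = condH μ (tup x (F.sup id)) (tup y χ') := by rw [hsup]
        _ ≤ ∑ χ ∈ F, condH μ (tup x χ) (tup y χ') := condH_tup_sup hμ x F (tup y χ')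
        _ ≤ ∑ χ ∈ F, condH μ (tup x χ) (tup y χ) := by
            refine Finset.sum_le_sum fun χ hχ => ?_
            have hsub : χ ⊆ χ' := by
              rw [hF, Finset.mem_filter] at hχ
              exact hχ.2 ▸ (hg χ hχ.1).2
            exact condH_comp_cond_le hμ (tup x χ) (tup y χ')
              (fun f => (fun i : χ => f ⟨i.1, hsub i.2⟩))
    have hdx : ∀ S : Finset ι, H μ (tup x S) - H μ (tup y S) = condH μ (tup x S) (tup y S) :=
      H_diff_eq_condH hμ x y hmatch
    have hsumd : ∑ χ ∈ F, (Hset μ x χ - Hset μ y χ) = ∑ χ ∈ F, condH μ (tup x χ) (tup y χ) := by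
      refine Finset.sum_congr rfl fun χ _ => ?_
      rw [hHx, hHy]
      exact hdx χ
    have hsx : ∑ χ ∈ F, (Hset μ x χ - Hset μ y χ)
        = ∑ χ ∈ F, Hset μ x χ - ∑ χ ∈ F, Hset μ y χ := Finset.sum_sub_distrib _ _
    have hd' : Hset μ x χ' - Hset μ y χ' = condH μ (tup x χ') (tup y χ') := by
      rw [hHx, hHy]; exact hdx χ'
    linarith [hchain, hsumd, hsx, hd']

end Ashby
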